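/- Let f ∈ ℚ[x₁,…,xₙ] be homogeneous of degree 2d, let m be the number of monomials of degree d in n variables, and let v(x) denote the column vector of all monomials x^α with |α| = d. Then f admits a rational SOS decomposition (f = Σ_{i=1}^r p_i² with p_i ∈ ℚ[x₁,…,xₙ]) if and only if there exists a symmetric positive semidefinite matrix Q ∈ ℚ^{m×m} such that f(x) = v(x)ᵗ Q v(x) holds as an identity of polynomials. -/

import Mathlib

open MvPolynomial
open Matrix


private lemma finsupp_degree_add {n : ℕ} (a b : Fin n →₀ ℕ) :
    Finsupp.degree (a + b) = Finsupp.degree a + Finsupp.degree b := by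
  simp [Finsupp.degree_eq_weight_one, map_add]

private lemma coeff_zero_of_degree_gt {n : ℕ} {g : MvPolynomial (Fin n) ℚ} {b : ℕ}
    (hg : g.totalDegree ≤ b) {s : Fin n →₀ ℕ} (hs : b < Finsupp.degree s) :
    coeff s g = 0 := by
  by_contra h
  have h2 : Finsupp.degree s ≤ g.totalDegree := le_totalDegree (mem_support_iff.mpr h)
  omega

private lemma sum_sq_zero {n r : ℕ} {g : Fin r → MvPolynomial (Fin n) ℚ}
    (h : ∑ i, g i ^ 2 = 0) (i : Fin r) : g i = 0 := by
  apply MvPolynomial.funext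
  intro x
  have hx : ∑ j, (eval x (g j)) ^ 2 = 0 := by
    have := congrArg (eval x) h
    simpa using this
  have h0 := (Finset.sum_eq_zero_iff_of_nonneg (fun j _ => sq_nonneg _)).mp hx i
    (Finset.mem_univ i)
  have := pow_eq_zero_iff (n := 2) (by norm_num) |>.mp h0
  simpa using this

private lemma homogeneousComponent_sq {n : ℕ} {g : MvPolynomial (Fin n) ℚ} {b : ℕ}
    (hg : g.totalDegree ≤ b) :
    homogeneousComponent (2 * b) (g ^ 2) = (homogeneousComponent b g) ^ 2 := by
  rw [sq, sq]
  ext μ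
  rw [coeff_homogeneousComponent, coeff_mul, coeff_mul]
  by_cases hdeg : Finsupp.degree μ = 2 * b
  · rw [if_pos hdeg]
    apply Finset.sum_congr rfl
    rintro ⟨u, w⟩ huw
    have hsum : Finsupp.degree u + Finsupp.degree w = 2 * b := by
      rw [← finsupp_degree_add, Finset.HasAntidiagonal.mem_antidiagonal.mp huw]; exact hdeg
    simp only [coeff_homogeneousComponent]
    by_cases hu : Finsupp.degree u = b
    · have hw : Finsupp.degree w = b := by omega
      rw [if_pos hu, if_pos hw]
    · rcases lt_or_gt_of_ne hu with hlt | hgt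
      · have hw : b < Finsupp.degree w := by omega
        have hw' : ¬ (Finsupp.degree w = b) := by omega
        rw [coeff_zero_of_degree_gt hg hw, if_neg hw', mul_zero, mul_zero]
      · rw [coeff_zero_of_degree_gt hg hgt, if_neg hu, zero_mul, zero_mul]
  · rw [if_neg hdeg]
    symm
    apply Finset.sum_eq_zero
    rintro ⟨u, w⟩ huw
    simp only [coeff_homogeneousComponent]
    by_cases hu : Finsupp.degree u = b
    · by_cases hw : Finsupp.degree w = b
      · exfalso
        apply hdeg
        rw [← Finset.HasAntidiagonal.mem_antidiagonal.mp huw, finsupp_degree_add, hu, hw]; ring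
      · rw [if_neg hw, mul_zero]
    · rw [if_neg hu, zero_mul]

private lemma totalDegree_le_of_hc_zero {n N : ℕ}
    {p : MvPolynomial (Fin n) ℚ} (h : p.totalDegree ≤ N + 1)
    (h0 : homogeneousComponent (N + 1) p = 0) : p.totalDegree ≤ N := by
  by_contra hc
  have htd : p.totalDegree = N + 1 := by omega
  have hp : p ≠ 0 := by
    intro h'
    rw [h', totalDegree_zero] at htd
    exact Nat.succ_ne_zero N htd.symm
  obtain ⟨s, hs, hs'⟩ := Finset.exists_mem_eq_sup p.support
    (support_nonempty.mpr hp) (fun s => s.sum fun _ e => e)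
  have hdeg : Finsupp.degree s = N + 1 := by
    have : p.totalDegree = s.sum fun _ e => e := hs'
    rw [htd] at this
    exact this.symm
  have hco : coeff s p ≠ 0 := mem_support_iff.mp hs
  have : coeff s (homogeneousComponent (N + 1) p) = coeff s p := by
    rw [coeff_homogeneousComponent, if_pos hdeg]
  rw [h0] at this
  simp at this
  exact hco this.symm


private lemma sos_homog_of_le {n d r : ℕ} {f : MvPolynomial (Fin n) ℚ}
    (hf : f.IsHomogeneous (2 * d)) {p : Fin r → MvPolynomial (Fin n) ℚ}
    (hb : ∀ i, (p i).totalDegree ≤ d) (hfeq : f = ∑ i, p i ^ 2) :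
    ∃ q : Fin r → MvPolynomial (Fin n) ℚ, (∀ i, (q i).IsHomogeneous d) ∧ f = ∑ i, q i ^ 2 := by
  refine ⟨fun i => homogeneousComponent d (p i), fun i => homogeneousComponent_isHomogeneous d _, ?_⟩
  have h1 : homogeneousComponent (2 * d) f = f := by
    rw [homogeneousComponent_of_mem ((mem_homogeneousSubmodule _ _).mpr hf), if_pos rfl]
  calc f = homogeneousComponent (2 * d) f := h1.symm
    _ = homogeneousComponent (2 * d) (∑ i, p i ^ 2) := by rw [← hfeq]
    _ = ∑ i, homogeneousComponent (2 * d) (p i ^ 2) := map_sum _ _ _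
    _ = ∑ i, (homogeneousComponent d (p i)) ^ 2 := by
        exact Finset.sum_congr rfl fun i _ => homogeneousComponent_sq (hb i)

private lemma exists_homog_sos {n d : ℕ} {f : MvPolynomial (Fin n) ℚ}
    (hf : f.IsHomogeneous (2 * d)) :
    ∀ (N r : ℕ) (p : Fin r → MvPolynomial (Fin n) ℚ),
      (∀ i, (p i).totalDegree ≤ N) → f = ∑ i, p i ^ 2 →
      ∃ q : Fin r → MvPolynomial (Fin n) ℚ, (∀ i, (q i).IsHomogeneous d) ∧ f = ∑ i, q i ^ 2 := by
  intro N
  induction N with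
  | zero =>
    intro r p hb hfeq
    exact sos_homog_of_le hf (fun i => le_trans (hb i) (Nat.zero_le d)) hfeq
  | succ N ih =>
    intro r p hb hfeq
    by_cases hNd : N + 1 ≤ d
    · exact sos_homog_of_le hf (fun i => le_trans (hb i) hNd) hfeq
    · -- N + 1 > d : top components vanish
      have h2 : homogeneousComponent (2 * (N + 1)) f = 0 := by
        rw [homogeneousComponent_of_mem ((mem_homogeneousSubmodule _ _).mpr hf),
          if_neg (fun hcon => hNd (by omega))]
      have h3 : ∑ i, (homogeneousComponent (N + 1) (p i)) ^ 2 = 0 := by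
        calc ∑ i, (homogeneousComponent (N + 1) (p i)) ^ 2
            = ∑ i, homogeneousComponent (2 * (N + 1)) (p i ^ 2) :=
              Finset.sum_congr rfl fun i _ => (homogeneousComponent_sq (hb i)).symm
          _ = homogeneousComponent (2 * (N + 1)) (∑ i, p i ^ 2) := (map_sum _ _ _).symm
          _ = 0 := by rw [← hfeq]; exact h2
      exact ih r p (fun i => totalDegree_le_of_hc_zero (hb i) (sum_sq_zero h3 i)) hfeq

private lemma homog_rep {n d m : ℕ} (v : Fin m → (Fin n →₀ ℕ)) (hv : Function.Injective v)
    (hv' : ∀ α : Fin n →₀ ℕ, Finsupp.degree α = d ↔ ∃ i, v i = α)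
    {q : MvPolynomial (Fin n) ℚ} (hq : q.IsHomogeneous d) :
    q = ∑ i, MvPolynomial.C (coeff (v i) q) * monomial (v i) 1 := by
  have hmono : ∀ (i : Fin m) (a : ℚ), MvPolynomial.C a * monomial (v i) (1:ℚ) = monomial (v i) a := by
    intro i a; rw [C_mul_monomial, mul_one]
  simp_rw [hmono]
  ext μ
  rw [coeff_sum]
  simp only [coeff_monomial]
  by_cases hμ : Finsupp.degree μ = d
  · obtain ⟨i0, hi0⟩ := (hv' μ).mp hμ
    rw [Finset.sum_eq_single i0]
    · rw [if_pos hi0, hi0]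
    · intro j _ hj
      rw [if_neg]
      intro hcon
      exact hj (hv (by rw [hcon, hi0]))
    · intro h; exact absurd (Finset.mem_univ i0) h
  · rw [hq.coeff_eq_zero hμ]
    symm
    apply Finset.sum_eq_zero
    intro i _
    rw [if_neg]
    intro hcon
    exact hμ ((hv' μ).mpr ⟨i, hcon⟩)

private lemma gram_expand {n m r : ℕ} (lam : Fin r → ℚ) (w : Fin r → Fin m → ℚ)
    (mon : Fin m → MvPolynomial (Fin n) ℚ) :
    ∑ i, ∑ j, MvPolynomial.C (∑ t, lam t * w t i * w t j) * (mon i * mon j)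
      = ∑ t, MvPolynomial.C (lam t) * (∑ i, MvPolynomial.C (w t i) * mon i) ^ 2 := by
  have step1 : ∀ t : Fin r, MvPolynomial.C (lam t) * (∑ i, MvPolynomial.C (w t i) * mon i) ^ 2
      = ∑ i, ∑ j, MvPolynomial.C (lam t) * ((MvPolynomial.C (w t i) * mon i) * (MvPolynomial.C (w t j) * mon j)) := by
    intro t
    rw [sq, Finset.sum_mul_sum, Finset.mul_sum]
    exact Finset.sum_congr rfl fun i _ => by rw [Finset.mul_sum]
  have lhs_eq : ∀ i j : Fin m, MvPolynomial.C (∑ t, lam t * w t i * w t j) * (mon i * mon j)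
      = ∑ t, MvPolynomial.C (lam t) * ((MvPolynomial.C (w t i) * mon i) * (MvPolynomial.C (w t j) * mon j)) := by
    intro i j
    rw [map_sum, Finset.sum_mul]
    apply Finset.sum_congr rfl
    intro t _
    simp only [_root_.map_mul]
    ring
  simp_rw [step1, lhs_eq]
  calc ∑ i : Fin m, ∑ j : Fin m, ∑ t : Fin r, MvPolynomial.C (lam t) * ((MvPolynomial.C (w t i) * mon i) * (MvPolynomial.C (w t j) * mon j))
      = ∑ i : Fin m, ∑ t : Fin r, ∑ j : Fin m, MvPolynomial.C (lam t) * ((MvPolynomial.C (w t i) * mon i) * (MvPolynomial.C (w t j) * mon j)) :=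
        Finset.sum_congr rfl fun i _ => Finset.sum_comm
    _ = ∑ t : Fin r, ∑ i : Fin m, ∑ j : Fin m, MvPolynomial.C (lam t) * ((MvPolynomial.C (w t i) * mon i) * (MvPolynomial.C (w t j) * mon j)) :=
        Finset.sum_comm

private lemma quad_expand {k : ℕ} (M : Matrix (Fin k) (Fin k) ℝ) (x : Fin k → ℝ) :
    star x ⬝ᵥ M.mulVec x = ∑ i, ∑ j, x i * M i j * x j := by
  simp [dotProduct, Matrix.mulVec, Finset.mul_sum, mul_assoc]

private lemma posSemidef_of_symm_quad {k : ℕ} (M : Matrix (Fin k) (Fin k) ℝ)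
    (hsymm : M.IsSymm) (h : ∀ x : Fin k → ℝ, 0 ≤ ∑ i, ∑ j, x i * M i j * x j) :
    M.PosSemidef := by
  refine Matrix.posSemidef_iff_dotProduct_mulVec.mpr ⟨?_, ?_⟩
  · ext i j
    rw [Matrix.conjTranspose_apply, star_trivial]
    exact congrFun (congrFun hsymm i) j
  · intro x
    rw [quad_expand]
    exact h x

private lemma psd_quad {k : ℕ} {M : Matrix (Fin k) (Fin k) ℝ} (h : M.PosSemidef)
    (x : Fin k → ℝ) : 0 ≤ ∑ i, ∑ j, x i * M i j * x j := by
  rw [← quad_expand]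
  exact h.dotProduct_mulVec_nonneg x

-- zero diagonal entry forces zero row
private lemma psd_row_zero {k : ℕ} {M : Matrix (Fin k) (Fin k) ℝ} (h : M.PosSemidef)
    (i : Fin k) (hd : M i i = 0) (j : Fin k) : M i j = 0 := by
  open scoped MatrixOrder in
  obtain ⟨B, hB⟩ := CStarAlgebra.nonneg_iff_eq_star_mul_self.mp h.nonneg
  rw [Matrix.star_eq_conjTranspose] at hB
  subst hB
  have hii : ∑ t, B t i * B t i = 0 := by
    have : (Bᴴ * B) i i = ∑ t, B t i * B t i := by
      simp [Matrix.mul_apply, Matrix.conjTranspose_apply]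
    rw [← this, hd]
  have hB : ∀ t, B t i = 0 := by
    intro t
    have := (Finset.sum_eq_zero_iff_of_nonneg (fun t _ => mul_self_nonneg (B t i))).mp hii t
      (Finset.mem_univ t)
    exact mul_self_eq_zero.mp this
  simp [Matrix.mul_apply, Matrix.conjTranspose_apply, hB]


private lemma psd_rat_decomp : ∀ (k : ℕ) (Q : Matrix (Fin k) (Fin k) ℚ), Q.IsSymm →
    (Q.map ((↑) : ℚ → ℝ)).PosSemidef →
    ∃ (lam : Fin k → ℚ) (w : Fin k → Fin k → ℚ),
      (∀ t, 0 ≤ lam t) ∧ ∀ i j, Q i j = ∑ t, lam t * w t i * w t j := by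
  intro k
  induction k with
  | zero =>
    intro Q _ _
    exact ⟨fun _ => 0, fun _ _ => 0, fun t => le_refl 0, fun i j => i.elim0⟩
  | succ k ih =>
    intro Q hsymm hpsd
    have hsym' : ∀ i j, Q i j = Q j i := fun i j => hsymm.apply j i
    set q : ℚ := Q 0 0 with hq
    -- diagonal entry is nonnegative
    have hq0 : 0 ≤ q := by
      have h := psd_quad hpsd (Pi.single 0 1)
      have : (0:ℝ) ≤ (Q.map ((↑) : ℚ → ℝ)) 0 0 := by
        simpa [Pi.single_apply, Finset.sum_ite_eq, mul_ite, ite_mul] using h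
      rw [Matrix.map_apply] at this
      exact_mod_cast this
    -- if pivot is zero the whole first row vanishes
    have hrow0 : q = 0 → ∀ j, Q 0 j = 0 := by
      intro hqz j
      have : (Q.map ((↑) : ℚ → ℝ)) 0 j = 0 := by
        apply psd_row_zero hpsd
        rw [Matrix.map_apply]
        exact_mod_cast hqz
      rw [Matrix.map_apply] at this
      exact_mod_cast this
    set R : Matrix (Fin (k+1)) (Fin (k+1)) ℚ :=
      Matrix.of (fun i j => Q i j - Q i 0 * Q 0 j / q) with hR
    have hRapp : ∀ i j, R i j = Q i j - Q i 0 * Q 0 j / q := fun i j => rfl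
    have hR0 : ∀ j, R 0 j = 0 := by
      intro j
      rw [hRapp]
      by_cases hqz : q = 0
      · rw [hrow0 hqz j, ← hq, hqz]
        simp
      · rw [← hq]
        field_simp
        ring
    have hRc : ∀ i, R i 0 = 0 := by
      intro i
      rw [hRapp]
      by_cases hqz : q = 0
      · rw [hsym' i 0, hrow0 hqz i, ← hq, hqz]
        simp
      · rw [← hq]
        field_simp
        ring
    have hRsym : ∀ i j, R i j = R j i := by
      intro i j
      rw [hRapp, hRapp, hsym' i j, hsym' i 0, hsym' j 0]
      ring
    have hfact : ∀ i j, Q i j = q * (Q i 0 / q) * (Q j 0 / q) + R i j := by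
      intro i j
      rw [hRapp]
      by_cases hqz : q = 0
      · have hi0 : Q i 0 = 0 := by rw [hsym' i 0]; exact hrow0 hqz i
        rw [hi0, hqz]
        simp
      · rw [hsym' j 0]
        field_simp
        ring
    -- R is positive semidefinite
    have hRpsd : (R.map ((↑) : ℚ → ℝ)).PosSemidef := by
      apply posSemidef_of_symm_quad
      · ext i j
        rw [Matrix.transpose_apply, Matrix.map_apply, Matrix.map_apply, hRsym]
      · intro x
        by_cases hqz : q = 0
        · have hRQ : ∀ i j, R i j = Q i j := by
            intro i j
            have hi0 : Q i 0 = 0 := by rw [hsym' i 0]; exact hrow0 hqz i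
            rw [hRapp, hi0]
            simp
          have : ∀ i j, (R.map ((↑) : ℚ → ℝ)) i j = (Q.map ((↑) : ℚ → ℝ)) i j := by
            intro i j; rw [Matrix.map_apply, Matrix.map_apply, hRQ]
          simp_rw [this]
          exact psd_quad hpsd x
        · have hqpos : (0:ℝ) < (q:ℝ) := by
            have : (0:ℝ) ≤ (q:ℝ) := by exact_mod_cast hq0
            rcases this.lt_or_eq with h | h
            · exact h
            · exact absurd (by exact_mod_cast h.symm) hqz
          set M : Matrix (Fin (k+1)) (Fin (k+1)) ℝ := Q.map ((↑) : ℚ → ℝ) with hM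
          have hMapp : ∀ i j, M i j = ((Q i j : ℚ) : ℝ) := fun i j => rfl
          have hMsym : ∀ i j, M i j = M j i := by
            intro i j; rw [hMapp, hMapp, hsym' i j]
          have hRmap : ∀ i j, (R.map ((↑) : ℚ → ℝ)) i j = M i j - M i 0 * M 0 j / (q:ℝ) := by
            intro i j
            rw [Matrix.map_apply, hRapp, hMapp, hMapp, hMapp]
            push_cast
            ring
          have hqne : (q:ℝ) ≠ 0 := ne_of_gt hqpos
          set A : ℝ := ∑ j, M 0 j * x j with hA
          set t : ℝ := -(A / (q:ℝ)) with ht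
          set y : Fin (k+1) → ℝ := Fin.cons (x 0 + t) (fun i => x i.succ) with hy
          -- expansion of the quadratic form peeling off index 0
          have expand : ∀ u : Fin (k+1) → ℝ,
              ∑ i, ∑ j, u i * M i j * u j
                = u 0 * M 0 0 * u 0 + u 0 * (∑ j : Fin k, M 0 j.succ * u j.succ)
                  + (∑ i : Fin k, u i.succ * M i.succ 0) * u 0
                  + ∑ i : Fin k, ∑ j : Fin k, u i.succ * M i.succ j.succ * u j.succ := by
            intro u
            rw [Fin.sum_univ_succ]
            simp_rw [Fin.sum_univ_succ]
            rw [Finset.sum_add_distrib]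
            rw [Finset.mul_sum, Finset.sum_mul]
            simp_rw [mul_assoc]
            ring_nf
          set Ar : ℝ := ∑ j : Fin k, M 0 j.succ * x j.succ with hAr
          set D : ℝ := ∑ i : Fin k, ∑ j : Fin k, x i.succ * M i.succ j.succ * x j.succ with hD
          have hBr : (∑ i : Fin k, x i.succ * M i.succ 0) = Ar := by
            rw [hAr]
            apply Finset.sum_congr rfl
            intro i _
            rw [hMsym i.succ 0]
            ring
          have hM00 : M 0 0 = (q:ℝ) := by rw [hMapp, hq]
          have hAdec : A = M 0 0 * x 0 + Ar := by rw [hA, Fin.sum_univ_succ]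
          have hy0 : y 0 = x 0 + t := rfl
          have hys : ∀ i : Fin k, y i.succ = x i.succ := fun i => by
            rw [hy, Fin.cons_succ]
          have hSy : ∑ i, ∑ j, y i * M i j * y j
              = (x 0 + t) * M 0 0 * (x 0 + t) + (x 0 + t) * Ar + Ar * (x 0 + t) + D := by
            have e1 : (∑ j : Fin k, M 0 j.succ * y j.succ) = Ar := by
              rw [hAr]
              exact Finset.sum_congr rfl fun j _ => by rw [hys]
            have e2 : (∑ i : Fin k, y i.succ * M i.succ 0) = Ar := by
              rw [← hBr]
              exact Finset.sum_congr rfl fun i _ => by rw [hys]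
            have e3 : (∑ i : Fin k, ∑ j : Fin k, y i.succ * M i.succ j.succ * y j.succ) = D := by
              rw [hD]
              exact Finset.sum_congr rfl fun i _ =>
                Finset.sum_congr rfl fun j _ => by rw [hys, hys]
            rw [expand y, hy0, e1, e2, e3]
          have hterm : ∀ i j : Fin (k+1),
              x i * (M i j - M i 0 * M 0 j / (q:ℝ)) * x j
                = x i * M i j * x j - (x i * M i 0) * (M 0 j * x j) / (q:ℝ) := by
            intro i j
            ring
          have hcross : ∑ i, ∑ j, (x i * M i 0) * (M 0 j * x j) / (q:ℝ) = A * A / (q:ℝ) := by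
            have h1 : ∀ i : Fin (k+1),
                ∑ j, (x i * M i 0) * (M 0 j * x j) / (q:ℝ) = (x i * M i 0) * A / (q:ℝ) := by
              intro i
              rw [hA, Finset.mul_sum, Finset.sum_div]
            simp_rw [h1]
            rw [← Finset.sum_div, ← Finset.sum_mul]
            have h2 : ∑ i, x i * M i 0 = A := by
              rw [hA]
              apply Finset.sum_congr rfl
              intro i _
              rw [hMsym i 0]
              ring
            rw [h2]
          have hMain : ∑ i, ∑ j, x i * (R.map ((↑) : ℚ → ℝ)) i j * x j
              = (∑ i, ∑ j, x i * M i j * x j) - A * A / (q:ℝ) := by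
            simp_rw [hRmap, hterm, Finset.sum_sub_distrib]
            rw [hcross]
          rw [hMain]
          have hfin : (∑ i, ∑ j, x i * M i j * x j) - A * A / (q:ℝ)
              = ∑ i, ∑ j, y i * M i j * y j := by
            rw [hSy, expand x, hBr, hM00, ht, hAdec, hM00]
            field_simp
            ring
          rw [hfin]
          exact psd_quad hpsd y
    -- now split off the first row/column
    set Qh : Matrix (Fin k) (Fin k) ℚ := R.submatrix Fin.succ Fin.succ with hQh
    have hQhsymm : Qh.IsSymm := by
      ext i j
      rw [Matrix.transpose_apply]
      exact hRsym j.succ i.succ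
    have hQhpsd : (Qh.map ((↑) : ℚ → ℝ)).PosSemidef := by
      have : Qh.map ((↑) : ℚ → ℝ) = (R.map ((↑) : ℚ → ℝ)).submatrix Fin.succ Fin.succ := rfl
      rw [this]
      exact hRpsd.submatrix Fin.succ
    obtain ⟨lamh, wh, hlamh, hdec⟩ := ih Qh hQhsymm hQhpsd
    refine ⟨Fin.cons q lamh, Fin.cons (fun i => Q i 0 / q) (fun t => Fin.cons 0 (wh t)),
      ?_, ?_⟩
    · intro t
      refine Fin.cases ?_ ?_ t
      · rw [Fin.cons_zero]
        exact hq0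
      · intro a
        rw [Fin.cons_succ]
        exact hlamh a
    · intro i j
      rw [Fin.sum_univ_succ, Fin.cons_zero]
      simp_rw [Fin.cons_succ, Fin.cons_zero]
      have htail : ∑ t : Fin k, lamh t * (Fin.cons (0:ℚ) (wh t) : Fin (k+1) → ℚ) i * (Fin.cons (0:ℚ) (wh t) : Fin (k+1) → ℚ) j
          = R i j := by
        refine Fin.cases ?_ ?_ i
        · rw [hR0]
          apply Finset.sum_eq_zero
          intro t _
          rw [Fin.cons_zero, mul_zero, zero_mul]
        · intro a
          refine Fin.cases ?_ ?_ j
          · rw [hRc]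
            apply Finset.sum_eq_zero
            intro t _
            rw [Fin.cons_zero, mul_zero]
          · intro b
            simp_rw [Fin.cons_succ]
            exact (hdec a b).symm
      rw [htail]
      exact hfact i j

private lemma nonneg_C_mul_sq {n : ℕ} (a : ℚ) (ha : 0 ≤ a) (g : MvPolynomial (Fin n) ℚ) :
    MvPolynomial.C a * g ^ 2 = ∑ _s : Fin (a.num.toNat * a.den), (MvPolynomial.C ((a.den : ℚ))⁻¹ * g) ^ 2 := by
  rw [Finset.sum_const, Finset.card_univ, Fintype.card_fin, nsmul_eq_mul, mul_pow]
  have hden : ((a.den : ℚ)) ≠ 0 := Nat.cast_ne_zero.mpr a.den_nz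
  have hnat : ((a.num.toNat * a.den : ℕ) : MvPolynomial (Fin n) ℚ)
      = MvPolynomial.C ((a.num.toNat * a.den : ℕ) : ℚ) := (map_natCast MvPolynomial.C _).symm
  rw [hnat, ← map_pow, ← mul_assoc, ← _root_.map_mul]
  congr 1
  have hscal : ((a.num.toNat * a.den : ℕ) : ℚ) * ((a.den : ℚ))⁻¹ ^ 2 = a := by
    have h1 : ((a.num.toNat : ℕ) : ℚ) = (a.num : ℚ) := by
      rw [← Int.cast_natCast, Int.toNat_of_nonneg (Rat.num_nonneg.mpr ha)]
    have h2 : ((a.num.toNat * a.den : ℕ) : ℚ) * ((a.den : ℚ))⁻¹ ^ 2 = (a.num : ℚ) / (a.den : ℚ) := by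
      push_cast
      rw [h1]
      field_simp
    rw [h2, Rat.num_div_den]
  exact congrArg MvPolynomial.C hscal.symm

private lemma gram_quad {m r : ℕ} (c : Fin r → Fin m → ℚ) (x : Fin m → ℝ) :
    ∑ i, ∑ j, x i * (((∑ t, c t i * c t j : ℚ) : ℝ)) * x j
      = ∑ t, (∑ i, (c t i : ℝ) * x i) ^ 2 := by
  have h1 : ∀ i j : Fin m, x i * (((∑ t, c t i * c t j : ℚ) : ℝ)) * x j
      = ∑ t, ((c t i : ℝ) * x i) * ((c t j : ℝ) * x j) := by
    intro i j
    push_cast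
    rw [Finset.mul_sum, Finset.sum_mul]
    apply Finset.sum_congr rfl
    intro t _
    ring
  simp_rw [h1]
  have h2 : ∀ t : Fin r, (∑ i, (c t i : ℝ) * x i) ^ 2
      = ∑ i, ∑ j, ((c t i : ℝ) * x i) * ((c t j : ℝ) * x j) := by
    intro t
    rw [sq, Finset.sum_mul_sum]
  simp_rw [h2]
  calc ∑ i : Fin m, ∑ j : Fin m, ∑ t : Fin r, ((c t i : ℝ) * x i) * ((c t j : ℝ) * x j)
      = ∑ i : Fin m, ∑ t : Fin r, ∑ j : Fin m, ((c t i : ℝ) * x i) * ((c t j : ℝ) * x j) :=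
        Finset.sum_congr rfl fun i _ => Finset.sum_comm
    _ = ∑ t : Fin r, ∑ i : Fin m, ∑ j : Fin m, ((c t i : ℝ) * x i) * ((c t j : ℝ) * x j) :=
        Finset.sum_comm


theorem rational_sos_iff_rational_psd_gram_matrix (n d m : ℕ)
    (f : MvPolynomial (Fin n) ℚ) (hf : f.IsHomogeneous (2 * d))
    (v : Fin m → (Fin n →₀ ℕ)) (hv : Function.Injective v)
    (hv' : ∀ α : Fin n →₀ ℕ, Finsupp.degree α = d ↔ ∃ i, v i = α) :
    (∃ (r : ℕ) (p : Fin r → MvPolynomial (Fin n) ℚ), f = ∑ i, (p i) ^ 2) ↔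
    (∃ Q : Matrix (Fin m) (Fin m) ℚ, Q.IsSymm ∧
      (Q.map ((↑) : ℚ → ℝ)).PosSemidef ∧
      f = ∑ i, ∑ j, MvPolynomial.C (Q i j) *
        (MvPolynomial.monomial (v i) 1 * MvPolynomial.monomial (v j) 1)) := by
  constructor
  · rintro ⟨r, p, hfeq⟩
    obtain ⟨qs, hqh, hqeq⟩ := exists_homog_sos hf
      (Finset.univ.sup (fun i => (p i).totalDegree)) r p
      (fun i => Finset.le_sup (f := fun i => (p i).totalDegree) (Finset.mem_univ i)) hfeq
    set c : Fin r → Fin m → ℚ := fun t i => coeff (v i) (qs t) with hc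
    refine ⟨Matrix.of (fun i j => ∑ t, c t i * c t j), ?_, ?_, ?_⟩
    · ext i j
      rw [Matrix.transpose_apply, Matrix.of_apply, Matrix.of_apply]
      exact Finset.sum_congr rfl fun t _ => mul_comm _ _
    · apply posSemidef_of_symm_quad
      · ext i j
        rw [Matrix.transpose_apply, Matrix.map_apply, Matrix.map_apply,
          Matrix.of_apply, Matrix.of_apply]
        exact congrArg _ (Finset.sum_congr rfl fun t _ => mul_comm _ _)
      · intro x
        have hval : ∀ i j : Fin m,
            ((Matrix.of (fun i j => ∑ t, c t i * c t j)).map ((↑) : ℚ → ℝ)) i j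
              = (((∑ t, c t i * c t j : ℚ)) : ℝ) := fun i j => rfl
        simp_rw [hval]
        rw [gram_quad c x]
        exact Finset.sum_nonneg fun t _ => sq_nonneg _
    · have hrep : ∀ t, qs t = ∑ i, MvPolynomial.C (c t i) * monomial (v i) 1 :=
        fun t => homog_rep v hv hv' (hqh t)
      calc f = ∑ t, qs t ^ 2 := hqeq
        _ = ∑ t, MvPolynomial.C ((1:ℚ))
              * (∑ i, MvPolynomial.C (c t i) * monomial (v i) 1) ^ 2 := by
            apply Finset.sum_congr rfl
            intro t _
            rw [← hrep t, _root_.map_one, one_mul]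
        _ = ∑ i, ∑ j, MvPolynomial.C (∑ t, (1:ℚ) * c t i * c t j)
              * (monomial (v i) 1 * monomial (v j) 1) := (gram_expand _ _ _).symm
        _ = ∑ i, ∑ j, MvPolynomial.C ((Matrix.of (fun i j => ∑ t, c t i * c t j)) i j)
              * (monomial (v i) 1 * monomial (v j) 1) := by
            apply Finset.sum_congr rfl
            intro i _
            apply Finset.sum_congr rfl
            intro j _
            rw [Matrix.of_apply]
            simp_rw [one_mul]
  · rintro ⟨Q, hQsymm, hQpsd, hfeq⟩
    obtain ⟨lam, w, hlam, hdec⟩ := psd_rat_decomp m Q hQsymm hQpsd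
    set g : Fin m → MvPolynomial (Fin n) ℚ :=
      fun t => ∑ i, MvPolynomial.C (w t i) * monomial (v i) 1 with hg
    have hf2 : f = ∑ t, MvPolynomial.C (lam t) * g t ^ 2 := by
      rw [hfeq]
      calc ∑ i, ∑ j, MvPolynomial.C (Q i j) * (monomial (v i) 1 * monomial (v j) 1)
          = ∑ i, ∑ j, MvPolynomial.C (∑ t, lam t * w t i * w t j)
              * (monomial (v i) 1 * monomial (v j) 1) := by
            apply Finset.sum_congr rfl
            intro i _
            apply Finset.sum_congr rfl
            intro j _
            rw [hdec i j]
        _ = ∑ t, MvPolynomial.C (lam t) * g t ^ 2 := gram_expand _ _ _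
    set Nt : Fin m → ℕ := fun t => (lam t).num.toNat * (lam t).den with hNt
    set h : Fin m → MvPolynomial (Fin n) ℚ :=
      fun t => MvPolynomial.C (((lam t).den : ℚ))⁻¹ * g t with hh
    have hf3 : f = ∑ t, ∑ _s : Fin (Nt t), (h t) ^ 2 := by
      rw [hf2]
      exact Finset.sum_congr rfl fun t _ => nonneg_C_mul_sq (lam t) (hlam t) (g t)
    refine ⟨Fintype.card ((t : Fin m) × Fin (Nt t)),
      fun i => h ((Fintype.equivFin ((t : Fin m) × Fin (Nt t))).symm i).1, ?_⟩
    calc f = ∑ t, ∑ _s : Fin (Nt t), (h t) ^ 2 := hf3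
      _ = ∑ x : (t : Fin m) × Fin (Nt t), h x.1 ^ 2 := by
          rw [← Finset.univ_sigma_univ, Finset.sum_sigma]
      _ = ∑ i, h (((Fintype.equivFin ((t : Fin m) × Fin (Nt t))).symm i)).1 ^ 2 :=
          (Equiv.sum_comp (Fintype.equivFin ((t : Fin m) × Fin (Nt t))).symm
            (fun x : (t : Fin m) × Fin (Nt t) => h x.1 ^ 2)).symm
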